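/- Let N ≥ 1, let v : ℝ^N → ℝ be bounded and lower semicontinuous, let r > 0, and let x₀ ∈ ℝ^N. Suppose (p, Y) ∈ J^{2,−} v_r(x₀), where v_r is the inf-convolution of v. Then, setting y₀ = x₀ − r² p, one has v_r(x₀) = v(y₀) + (r²/2)|p|² and (p, Y) ∈ J^{2,−} v(y₀). -/

import Mathlib

open scoped RealInnerProductSpace Topology
open Filter Asymptotics Metric MeasureTheory

noncomputable section

/-- Euclidean space ℝ^N. -/
abbrev E (N : ℕ) : Type := EuclideanSpace ℝ (Fin N)

/-- Inf-convolution `v_r(x) = inf_y (v(y) + |x-y|²/(2r²))`. -/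
def infConv {N : ℕ} (v : E N → ℝ) (r : ℝ) (x : E N) : ℝ :=
  ⨅ y : E N, (v y + ‖x - y‖ ^ 2 / (2 * r ^ 2))

/-- `(p, Y)` belongs to the second-order subjet `J^{2,-} w (x)`:
`Y` is symmetric and `w(x+h) ≥ w(x) + ⟨p,h⟩ + (1/2)⟨Yh,h⟩ + o(‖h‖²)` as `h → 0`. -/
def InSubjet {N : ℕ} (w : E N → ℝ) (x : E N) (p : E N) (Y : E N →ₗ[ℝ] E N) : Prop :=
  Y.IsSymmetric ∧ ∃ e : E N → ℝ, e =o[𝓝 (0 : E N)] (fun h => ‖h‖ ^ 2) ∧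
    ∀ᶠ h in 𝓝 (0 : E N), w (x + h) ≥ w x + ⟪p, h⟫ + (1 / 2) * ⟪Y h, h⟫ + e h

/-- A bounded lsc function plus the quadratic penalty attains its minimum. -/
theorem infConv_exists_min {N : ℕ} (v : E N → ℝ) (M : ℝ) (hb : ∀ x, |v x| ≤ M)
    (hlsc : LowerSemicontinuous v) (r : ℝ) (hr : 0 < r) (x : E N) :
    ∃ y₀ : E N, ∀ y, v y₀ + ‖x - y₀‖ ^ 2 / (2 * r ^ 2) ≤ v y + ‖x - y‖ ^ 2 / (2 * r ^ 2) := by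
  have hr2 : (0:ℝ) < 2 * r ^ 2 := by positivity
  set f : E N → ℝ := fun y => v y + ‖x - y‖ ^ 2 / (2 * r ^ 2) with hf
  have hlow2 : ∀ y, -M + ‖x - y‖ ^ 2 / (2 * r ^ 2) ≤ f y := by
    intro y
    have h1 := (abs_le.mp (hb y)).1
    simp only [hf]; linarith
  have hfx : f x ≤ M := by
    have := (abs_le.mp (hb x)).2
    simp only [hf, sub_self, norm_zero]
    norm_num; linarith
  have hflsc : LowerSemicontinuous f := by
    rw [hf]
    exact hlsc.add (Continuous.lowerSemicontinuous (by fun_prop))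
  have hgoal : ∀ z y : E N, f z ≤ f y ↔
      v z + ‖x - z‖ ^ 2 / (2 * r ^ 2) ≤ v y + ‖x - y‖ ^ 2 / (2 * r ^ 2) := fun _ _ => Iff.rfl
  clear_value f
  have hlow : ∀ y, -M ≤ f y := by
    intro y
    have h2 : 0 ≤ ‖x - y‖ ^ 2 / (2 * r ^ 2) := by positivity
    linarith [hlow2 y]
  have hbdd : BddBelow (Set.range f) := ⟨-M, by rintro _ ⟨y, rfl⟩; exact hlow y⟩
  set m : ℝ := ⨅ y, f y with hm
  clear_value m
  have hmle : m ≤ f x := hm ▸ ciInf_le hbdd x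
  have hseq : ∀ n : ℕ, ∃ y, f y < m + 1 / (n + 1) := by
    intro n
    rw [hm]
    apply exists_lt_of_ciInf_lt
    have : (0:ℝ) < 1 / (n + 1) := by positivity
    rw [← hm]; linarith
  choose y hy using hseq
  set R : ℝ := Real.sqrt (2 * r ^ 2 * (2 * M + 1)) with hR
  have hball : ∀ n, y n ∈ closedBall x R := by
    intro n
    have h1 : f (y n) < m + 1 := by
      have h0 := hy n
      have h2 : (1:ℝ) / (n + 1) ≤ 1 := by
        rw [div_le_one (by positivity)]; linarith [Nat.cast_nonneg (α := ℝ) n]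
      linarith
    have h3 := hlow2 (y n)
    have h4 : ‖x - y n‖ ^ 2 / (2 * r ^ 2) < 2 * M + 1 := by linarith
    have h5 : ‖x - y n‖ ^ 2 ≤ 2 * r ^ 2 * (2 * M + 1) := by
      rw [div_lt_iff₀ hr2] at h4; nlinarith
    have h6 : ‖x - y n‖ ≤ R := by
      have := Real.sqrt_le_sqrt h5
      rwa [Real.sqrt_sq (norm_nonneg _)] at this
    rw [mem_closedBall, dist_comm, dist_eq_norm]
    exact h6
  obtain ⟨y₀, -, φ, hφ, htend⟩ := (isCompact_closedBall x R).tendsto_subseq hball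
  refine ⟨y₀, fun z => (hgoal y₀ z).mp (le_trans ?_ (hm ▸ ciInf_le hbdd z))⟩
  by_contra h
  push_neg at h
  obtain ⟨c, hc1, hc2⟩ := exists_between h
  have hev : ∀ᶠ n in atTop, c < f (y (φ n)) := htend.eventually (hflsc y₀ c hc2)
  obtain ⟨n₀, hn₀⟩ := exists_nat_one_div_lt (sub_pos.mpr hc1)
  obtain ⟨k, hk1, hk2⟩ := (hev.and (eventually_ge_atTop n₀)).exists
  have hφk : (n₀ : ℝ) ≤ φ k := by
    exact_mod_cast le_trans hk2 hφ.le_apply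
  have h7 : (1:ℝ) / (φ k + 1) ≤ 1 / (n₀ + 1) :=
    one_div_le_one_div_of_le (by positivity) (by linarith)
  have h8 := hy (φ k)
  linarith

theorem infConv_le {N : ℕ} (v : E N → ℝ) (M : ℝ) (hb : ∀ x, |v x| ≤ M)
    (r : ℝ) (hr : 0 < r) (x y : E N) :
    infConv v r x ≤ v y + ‖x - y‖ ^ 2 / (2 * r ^ 2) := by
  apply ciInf_le
  refine ⟨-M, ?_⟩
  rintro _ ⟨z, rfl⟩
  have h1 := (abs_le.mp (hb z)).1
  have h2 : 0 ≤ ‖x - z‖ ^ 2 / (2 * r ^ 2) := by positivity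
  linarith

set_option maxHeartbeats 1600000 in
/-- Magic property of inf-convolutions: if `(p, Y) ∈ J^{2,-} v_r(x₀)` then, with
`y₀ = x₀ - r²p`, one has `v_r(x₀) = v(y₀) + (r²/2)|p|²` and `(p, Y) ∈ J^{2,-} v(y₀)`. -/
theorem infConv_subjet (N : ℕ) (hN : 1 ≤ N) (v : E N → ℝ)
    (hb : ∃ M : ℝ, ∀ x, |v x| ≤ M) (hlsc : LowerSemicontinuous v)
    (r : ℝ) (hr : 0 < r) (x₀ p : E N) (Y : E N →ₗ[ℝ] E N)
    (hpY : InSubjet (infConv v r) x₀ p Y) :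
    infConv v r x₀ = v (x₀ - r ^ 2 • p) + (r ^ 2 / 2) * ‖p‖ ^ 2 ∧
    InSubjet v (x₀ - r ^ 2 • p) p Y := by
  obtain ⟨M, hbM⟩ := hb
  obtain ⟨hsym, e, he, hev⟩ := hpY
  have hr2 : (0:ℝ) < 2 * r ^ 2 := by positivity
  obtain ⟨y₀, hy₀⟩ := infConv_exists_min v M hbM hlsc r hr x₀
  have hmin : infConv v r x₀ = v y₀ + ‖x₀ - y₀‖ ^ 2 / (2 * r ^ 2) :=
    le_antisymm (infConv_le v M hbM r hr x₀ y₀) (le_ciInf fun z => hy₀ z)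
  obtain ⟨q, hq⟩ : ∃ q : E N, q = (x₀ - y₀) - r ^ 2 • p := ⟨_, rfl⟩
  have hQ : ∀ᶠ h in 𝓝 (0 : E N),
      ⟪q, h⟫ ≥ -‖h‖ ^ 2 / 2 + (r ^ 2 / 2) * ⟪Y h, h⟫ + r ^ 2 * e h := by
    filter_upwards [hev] with h hh
    have h1 : infConv v r (x₀ + h) ≤ v y₀ + ‖(x₀ - y₀) + h‖ ^ 2 / (2 * r ^ 2) := by
      have := infConv_le v M hbM r hr (x₀ + h) y₀
      have heq : x₀ + h - y₀ = (x₀ - y₀) + h := by abel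
      rwa [heq] at this
    rw [hmin] at hh
    have h2 : ‖(x₀ - y₀) + h‖ ^ 2 = ‖x₀ - y₀‖ ^ 2 + 2 * ⟪x₀ - y₀, h⟫ + ‖h‖ ^ 2 :=
      norm_add_sq_real _ _
    have h3 : ⟪x₀ - y₀, h⟫ = ⟪q, h⟫ + r ^ 2 * ⟪p, h⟫ := by
      have hxy : x₀ - y₀ = q + r ^ 2 • p := by rw [hq]; abel
      rw [hxy, inner_add_left, real_inner_smul_left]
    have h6 : ‖x₀ - y₀‖ ^ 2 / (2 * r ^ 2) + (⟪p, h⟫ + 1 / 2 * ⟪Y h, h⟫ + e h)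
        ≤ ‖(x₀ - y₀) + h‖ ^ 2 / (2 * r ^ 2) := by linarith
    have h7 := mul_le_mul_of_nonneg_left h6 hr2.le
    rw [mul_add, mul_div_cancel₀ _ (ne_of_gt hr2), mul_div_cancel₀ _ (ne_of_gt hr2),
      h2, h3] at h7
    nlinarith [h7]
  -- conclude q = 0
  have hq0 : q = 0 := by
    obtain ⟨u, hu⟩ : ∃ u : E N, u = -q := ⟨_, rfl⟩
    have htu : Filter.Tendsto (fun t : ℝ => t • u) (𝓝[>] (0:ℝ)) (𝓝 (0 : E N)) := by
      have h : Filter.Tendsto (fun t : ℝ => t • u) (𝓝 (0:ℝ)) (𝓝 (0 : E N)) := by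
        have := (continuous_id.smul (continuous_const : Continuous fun _ : ℝ => u)).tendsto 0
        have h' : Filter.Tendsto (fun t : ℝ => t • u) (𝓝 0) (𝓝 ((0:ℝ) • u)) := this
        rwa [zero_smul] at h'
      exact h.mono_left nhdsWithin_le_nhds
    obtain ⟨C, hC⟩ : ∃ C : ℝ, C = -‖u‖ ^ 2 / 2 + (r ^ 2 / 2) * ⟪Y u, u⟫ := ⟨_, rfl⟩
    have hev2 : ∀ᶠ t in 𝓝[>] (0:ℝ),
        t * C + r ^ 2 * (e (t • u) / t) ≤ -‖q‖ ^ 2 := by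
      filter_upwards [htu.eventually hQ, self_mem_nhdsWithin] with t ht (htpos : 0 < t)
      have e1 : ⟪q, t • u⟫ = -(t * ‖q‖ ^ 2) := by
        rw [real_inner_smul_right, hu, inner_neg_right, real_inner_self_eq_norm_sq]; ring
      have e2 : ‖t • u‖ ^ 2 = t ^ 2 * ‖u‖ ^ 2 := by
        rw [norm_smul, mul_pow, Real.norm_eq_abs, sq_abs]
      have e3 : ⟪Y (t • u), t • u⟫ = t ^ 2 * ⟪Y u, u⟫ := by
        rw [Y.map_smul, real_inner_smul_left, real_inner_smul_right]; ring
      rw [e1, e2, e3] at ht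
      have key : t ^ 2 * C + r ^ 2 * e (t • u) ≤ -(t * ‖q‖ ^ 2) := by
        rw [hC]; nlinarith [ht]
      have hdiv : (t ^ 2 * C + r ^ 2 * e (t • u)) / t ≤ (-(t * ‖q‖ ^ 2)) / t := by
        gcongr
      calc t * C + r ^ 2 * (e (t • u) / t)
          = (t ^ 2 * C + r ^ 2 * e (t • u)) / t := by field_simp
        _ ≤ (-(t * ‖q‖ ^ 2)) / t := hdiv
        _ = -‖q‖ ^ 2 := by field_simp
    have htend0 : Filter.Tendsto (fun t : ℝ => t * C + r ^ 2 * (e (t • u) / t))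
        (𝓝[>] (0:ℝ)) (𝓝 0) := by
      have t1 : Filter.Tendsto (fun t : ℝ => t * C) (𝓝[>] (0:ℝ)) (𝓝 0) := by
        have h0 : Filter.Tendsto (fun t : ℝ => t) (𝓝[>] (0:ℝ)) (𝓝 (0:ℝ)) :=
          tendsto_id.mono_left nhdsWithin_le_nhds
        simpa using h0.mul_const C
      have t2 : Filter.Tendsto (fun t : ℝ => e (t • u) / t) (𝓝[>] (0:ℝ)) (𝓝 0) := by
        have hcomp : (fun t : ℝ => e (t • u)) =o[𝓝[>] (0:ℝ)] (fun t => ‖t • u‖ ^ 2) :=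
          he.comp_tendsto htu
        have hbig : (fun t : ℝ => ‖t • u‖ ^ 2) =O[𝓝[>] (0:ℝ)] (fun t : ℝ => t) := by
          apply IsBigO.of_bound (‖u‖ ^ 2)
          have habs : ∀ᶠ t in 𝓝[>] (0:ℝ), |t - 0| < 1 :=
            (eventually_abs_sub_lt (0:ℝ) one_pos).filter_mono nhdsWithin_le_nhds
          filter_upwards [habs, self_mem_nhdsWithin] with t ht (htpos : 0 < t)
          rw [sub_zero] at ht
          have e2 : ‖t • u‖ ^ 2 = |t| ^ 2 * ‖u‖ ^ 2 := by
            rw [norm_smul, mul_pow, Real.norm_eq_abs]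
          rw [Real.norm_eq_abs, Real.norm_eq_abs, e2, abs_of_nonneg (by positivity)]
          nlinarith [mul_nonneg (mul_nonneg (sub_nonneg.mpr ht.le) (abs_nonneg t)) (sq_nonneg ‖u‖)]
        exact (hcomp.trans_isBigO hbig).tendsto_div_nhds_zero
      have := t1.add (t2.const_mul (r ^ 2))
      simpa using this
    have hle : (0:ℝ) ≤ -‖q‖ ^ 2 := le_of_tendsto htend0 hev2
    have h1 : ‖q‖ ^ 2 = 0 := le_antisymm (by linarith) (by positivity)
    have h2 : ‖q‖ = 0 := pow_eq_zero_iff (by norm_num) |>.mp h1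
    exact norm_eq_zero.mp h2
  rw [hq] at hq0
  have hxy : x₀ - y₀ = r ^ 2 • p := sub_eq_zero.mp hq0
  have hy₀eq : y₀ = x₀ - r ^ 2 • p := by
    have h2 : y₀ = x₀ - (x₀ - y₀) := by abel
    rw [h2, hxy]
  have hnorm : ‖x₀ - y₀‖ ^ 2 / (2 * r ^ 2) = (r ^ 2 / 2) * ‖p‖ ^ 2 := by
    rw [hxy, norm_smul, mul_pow, Real.norm_eq_abs, sq_abs]
    rw [div_eq_iff (ne_of_gt hr2)]
    ring
  constructor
  · rw [hmin, hnorm, hy₀eq]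
  · refine ⟨hsym, e, he, ?_⟩
    filter_upwards [hev] with h hh
    have h1 : infConv v r (x₀ + h) ≤ v (y₀ + h) + ‖x₀ - y₀‖ ^ 2 / (2 * r ^ 2) := by
      have := infConv_le v M hbM r hr (x₀ + h) (y₀ + h)
      have heq : x₀ + h - (y₀ + h) = x₀ - y₀ := by abel
      rwa [heq] at this
    rw [hmin] at hh
    rw [← hy₀eq]
    linarith
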